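/- For every positive integer n there exists a constant C > 0 such that for every vector e ∈ ℝⁿ one has ∫_{S^{n−1}} |e| / (1 + (e·η)²) dH^{n−1}(η) ≤ C, where the integral is over the unit sphere S^{n−1} = {η ∈ ℝⁿ : |η| = 1} with respect to the (n−1)-dimensional Hausdorff (surface) measure H^{n−1}. -/

import Mathlib

open MeasureTheory Metric Set Finset Real
open scoped NNReal ENNReal

noncomputable section SphAux

variable {m : ℕ}

def sphQ (y : Fin m → ℝ) : ℝ := ∑ j, y j ^ 2

def sphD (m : ℕ) : Set (Fin m → ℝ) := {y | sphQ y ≤ 1 - 1/(m+1)}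

def sphPhi (s : ℝ) (y : Fin m → ℝ) : ℝ := s * Real.sqrt (1 - sphQ y)

def sphG (i : Fin (m+1)) (s : ℝ) (y : Fin m → ℝ) : EuclideanSpace ℝ (Fin (m+1)) :=
  WithLp.toLp 2 (i.insertNth (sphPhi s y) y)

def sphSign (b : Bool) : ℝ := if b then 1 else -1

def sphGset (m : ℕ) (i : Fin (m+1)) (b : Bool) : Set (EuclideanSpace ℝ (Fin (m+1))) :=
  {η ∈ sphere (0 : EuclideanSpace ℝ (Fin (m+1))) 1 |
    Real.sqrt (1/(m+1)) ≤ sphSign b * η i}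

lemma sphQ_nonneg (y : Fin m → ℝ) : 0 ≤ sphQ y := Finset.sum_nonneg fun _ _ => sq_nonneg _

lemma mem_sphD_sq_le {y : Fin m → ℝ} (hy : y ∈ sphD m) (k : Fin m) : y k ^ 2 ≤ 1 := by
  have h1 : y k ^ 2 ≤ sphQ y :=
    Finset.single_le_sum (f := fun j => y j ^ 2) (fun _ _ => sq_nonneg _) (Finset.mem_univ k)
  have h2 : sphQ y ≤ 1 - 1/(m+1) := hy
  have : (0:ℝ) < 1/(m+1) := by positivity
  linarith

lemma mem_sphD_abs_le {y : Fin m → ℝ} (hy : y ∈ sphD m) (k : Fin m) : |y k| ≤ 1 := by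
  have h1 : y k ^ 2 ≤ sphQ y :=
    Finset.single_le_sum (f := fun j => y j ^ 2) (fun _ _ => sq_nonneg _) (Finset.mem_univ k)
  have h2 : sphQ y ≤ 1 - 1/(m+1) := hy
  have h3 : (0:ℝ) < 1/(m+1) := by positivity
  nlinarith [abs_nonneg (y k), sq_abs (y k)]

lemma sphD_subset_box : sphD m ⊆ Set.pi Set.univ (fun _ : Fin m => Set.Icc (-1:ℝ) 1) := by
  intro y hy k _
  have := mem_sphD_abs_le hy k
  rw [Set.mem_Icc]
  constructor <;> [linarith [neg_abs_le (y k)]; linarith [le_abs_self (y k)]]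

lemma sqrt_sub_sqrt_abs_le {A B c : ℝ} (hc : 0 < c) (hA : c ≤ A) (hB : c ≤ B) :
    |Real.sqrt A - Real.sqrt B| ≤ |A - B| / Real.sqrt c := by
  have hc' : (0:ℝ) < Real.sqrt c := Real.sqrt_pos.2 hc
  rw [div_eq_inv_mul, ← abs_of_pos (show (0:ℝ) < (Real.sqrt c)⁻¹ by positivity), ← abs_mul]
  have hA0 : 0 ≤ A := le_trans hc.le hA
  have hB0 : 0 ≤ B := le_trans hc.le hB
  have hsA : Real.sqrt c ≤ Real.sqrt A := Real.sqrt_le_sqrt hA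
  have hsB : Real.sqrt c ≤ Real.sqrt B := Real.sqrt_le_sqrt hB
  have h2A : Real.sqrt A ^ 2 = A := Real.sq_sqrt hA0
  have h2B : Real.sqrt B ^ 2 = B := Real.sq_sqrt hB0
  rw [abs_le]
  constructor
  · rw [neg_le, ← abs_neg, neg_sub]
    calc Real.sqrt B - Real.sqrt A ≤ |Real.sqrt B - Real.sqrt A| := le_abs_self _
    _ ≤ |(Real.sqrt c)⁻¹ * (B - A)| := by
        rw [abs_mul, abs_of_pos (show (0:ℝ) < (Real.sqrt c)⁻¹ by positivity)]
        rw [show B - A = (Real.sqrt B - Real.sqrt A) * (Real.sqrt B + Real.sqrt A) by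
          nlinarith, abs_mul]
        rcases abs_cases (Real.sqrt B - Real.sqrt A) with ⟨h, _⟩ | ⟨h, _⟩ <;>
        · rw [h]
          rw [abs_of_nonneg (by positivity : (0:ℝ) ≤ Real.sqrt B + Real.sqrt A)]
          rw [inv_mul_eq_div, le_div_iff₀ hc', ← sub_nonneg]
          nlinarith
    _ = |(-((Real.sqrt c)⁻¹ * (A - B)))| := by congr 1; ring
  · calc Real.sqrt A - Real.sqrt B ≤ |Real.sqrt A - Real.sqrt B| := le_abs_self _
    _ ≤ |(Real.sqrt c)⁻¹ * (A - B)| := by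
        rw [abs_mul, abs_of_pos (show (0:ℝ) < (Real.sqrt c)⁻¹ by positivity)]
        rw [show A - B = (Real.sqrt A - Real.sqrt B) * (Real.sqrt A + Real.sqrt B) by
          nlinarith, abs_mul]
        rcases abs_cases (Real.sqrt A - Real.sqrt B) with ⟨h, _⟩ | ⟨h, _⟩ <;>
        · rw [h]
          rw [abs_of_nonneg (by positivity : (0:ℝ) ≤ Real.sqrt A + Real.sqrt B)]
          rw [inv_mul_eq_div, le_div_iff₀ hc', ← sub_nonneg]
          nlinarith

lemma sphG_lipschitz (i : Fin (m+1)) (s : ℝ) (hs : |s| = 1) :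
    LipschitzOnWith (2*(m+1)^2 : ℝ≥0) (sphG i s) (sphD m) := by
  rw [lipschitzOnWith_iff_dist_le_mul]
  intro y hy z hz
  set δ := dist y z with hδdef
  have hδ0 : 0 ≤ δ := dist_nonneg
  have hcoord : ∀ k, |y k - z k| ≤ δ := fun k => by
    simpa [Real.dist_eq] using dist_le_pi_dist y z k
  have hyD : sphQ y ≤ 1 - 1/(m+1) := hy
  have hzD : sphQ z ≤ 1 - 1/(m+1) := hz
  have hc : (0:ℝ) < 1/(m+1) := by positivity
  -- bound on |Q y - Q z|
  have hQ : |sphQ y - sphQ z| ≤ 2*m*δ := by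
    have : sphQ y - sphQ z = ∑ j, (y j - z j) * (y j + z j) := by
      simp only [sphQ, ← Finset.sum_sub_distrib]; apply Finset.sum_congr rfl; intros; ring
    rw [this]
    calc |∑ j, (y j - z j) * (y j + z j)| ≤ ∑ j, |(y j - z j) * (y j + z j)| :=
          Finset.abs_sum_le_sum_abs _ _
    _ ≤ ∑ _j : Fin m, δ * 2 := by
        apply Finset.sum_le_sum
        intro j _
        rw [abs_mul]
        have h1 := hcoord j
        have h2 : |y j + z j| ≤ 2 := by
          have := mem_sphD_abs_le hy j
          have := mem_sphD_abs_le hz j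
          calc |y j + z j| ≤ |y j| + |z j| := abs_add_le _ _
          _ ≤ 2 := by linarith
        exact mul_le_mul h1 h2 (abs_nonneg _) hδ0
    _ = 2*m*δ := by rw [Finset.sum_const]; simp [Finset.card_univ]; ring
  -- bound on |phi y - phi z|
  have hphi : |sphPhi s y - sphPhi s z| ≤ (m+1) * (2*m*δ) := by
    have hfac : sphPhi s y - sphPhi s z
        = s * (Real.sqrt (1 - sphQ y) - Real.sqrt (1 - sphQ z)) := by
      simp [sphPhi]; ring
    rw [hfac, abs_mul, hs, one_mul]
    have h1 : |Real.sqrt (1 - sphQ y) - Real.sqrt (1 - sphQ z)|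
        ≤ |(1 - sphQ y) - (1 - sphQ z)| / Real.sqrt (1/(m+1)) := by
      apply sqrt_sub_sqrt_abs_le hc <;> linarith
    have h2 : |(1 - sphQ y) - (1 - sphQ z)| = |sphQ y - sphQ z| := by
      rw [← abs_neg]; congr 1; ring
    have h3 : Real.sqrt (1/(m+1)) = 1 / Real.sqrt (m+1) := by
      rw [one_div, one_div, Real.sqrt_inv]
    have h4 : (0:ℝ) < Real.sqrt (m+1) := Real.sqrt_pos.2 (by positivity)
    have h5 : Real.sqrt (m+1) ≤ m+1 := by
      nlinarith [Real.sq_sqrt (show (0:ℝ) ≤ m+1 by positivity),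
        Real.one_le_sqrt.2 (show (1:ℝ) ≤ m+1 by push_cast; linarith), Real.sqrt_nonneg ((m:ℝ)+1)]
    calc |Real.sqrt (1 - sphQ y) - Real.sqrt (1 - sphQ z)|
        ≤ |sphQ y - sphQ z| / (1 / Real.sqrt (m+1)) := by rw [← h2, ← h3]; exact h1
    _ = Real.sqrt (m+1) * |sphQ y - sphQ z| := by field_simp
    _ ≤ (m+1) * (2*m*δ) := by
        apply mul_le_mul h5 hQ (abs_nonneg _) (by positivity)
  -- now the distance computation
  have hKpos : (0:ℝ) ≤ 2*((m:ℝ)+1)^2 := by positivity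
  have hdist : dist (sphG i s y) (sphG i s z)
      = Real.sqrt ((sphPhi s y - sphPhi s z)^2 + ∑ k, (y k - z k)^2) := by
    rw [EuclideanSpace.dist_eq]
    congr 1
    rw [Fin.sum_univ_succAbove _ i]
    simp [sphG, Fin.insertNth_apply_same, Fin.insertNth_apply_succAbove, Real.dist_eq, sq_abs]
  rw [hdist]
  have hsum : (sphPhi s y - sphPhi s z)^2 + ∑ k, (y k - z k)^2
      ≤ ((2*((m:ℝ)+1)^2) * δ)^2 := by
    have h6 : ∑ k, (y k - z k)^2 ≤ m * δ^2 := by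
      calc ∑ k, (y k - z k)^2 ≤ ∑ _k : Fin m, δ^2 := by
            apply Finset.sum_le_sum
            intro k _
            have h1 := hcoord k
            exact sq_le_sq' (by linarith [neg_abs_le (y k - z k)]) (by linarith [le_abs_self (y k - z k)])
      _ = m * δ^2 := by rw [Finset.sum_const]; simp [Finset.card_univ]
    have h7 : (sphPhi s y - sphPhi s z)^2 ≤ ((m+1) * (2*m*δ))^2 := by
      nlinarith [abs_nonneg (sphPhi s y - sphPhi s z), sq_abs (sphPhi s y - sphPhi s z), hphi]
    have hm : (0:ℝ) ≤ m := by positivity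
    nlinarith [sq_nonneg δ, sq_nonneg ((m:ℝ)*δ), hm, hδ0]
  calc Real.sqrt ((sphPhi s y - sphPhi s z)^2 + ∑ k, (y k - z k)^2)
      ≤ Real.sqrt (((2*((m:ℝ)+1)^2) * δ)^2) := Real.sqrt_le_sqrt hsum
  _ = (2*((m:ℝ)+1)^2) * δ := Real.sqrt_sq (by positivity)
  _ = ↑(2*(m+1)^2 : ℝ≥0) * δ := by push_cast; ring

lemma abs_sphSign (b : Bool) : |sphSign b| = 1 := by cases b <;> simp [sphSign]

lemma sq_sphSign (b : Bool) : sphSign b ^ 2 = 1 := by cases b <;> simp [sphSign]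

lemma sphere_sum_sq {η : EuclideanSpace ℝ (Fin (m+1))}
    (hη : η ∈ sphere (0 : EuclideanSpace ℝ (Fin (m+1))) 1) : ∑ j, η j ^ 2 = 1 := by
  rw [mem_sphere_iff_norm, sub_zero, EuclideanSpace.norm_eq] at hη
  have h0 : (0:ℝ) ≤ ∑ j, ‖η j‖ ^ 2 := Finset.sum_nonneg fun _ _ => sq_nonneg _
  have := Real.sqrt_eq_one.mp hη
  simpa [Real.norm_eq_abs, sq_abs] using this

lemma sphere_subset_iUnion :
    sphere (0 : EuclideanSpace ℝ (Fin (m+1))) 1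
      ⊆ ⋃ p : Fin (m+1) × Bool, sphGset m p.1 p.2 := by
  intro η hη
  have hsum := sphere_sum_sq hη
  have hex : ∃ i, 1/((m:ℝ)+1) ≤ η i ^ 2 := by
    by_contra hcon
    push_neg at hcon
    have : ∑ j, η j ^ 2 < ∑ _j : Fin (m+1), 1/((m:ℝ)+1) :=
      Finset.sum_lt_sum_of_nonempty ⟨0, Finset.mem_univ 0⟩ fun j _ => hcon j
    rw [hsum, Finset.sum_const] at this
    simp only [Finset.card_univ, Fintype.card_fin, nsmul_eq_mul] at this
    have hm1 : (0:ℝ) < (m:ℝ)+1 := by positivity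
    rw [show ((m+1 : ℕ) : ℝ) = (m:ℝ)+1 by push_cast; ring] at this
    field_simp at this
    linarith
  obtain ⟨i, hi⟩ := hex
  have habs : Real.sqrt (1/(m+1)) ≤ |η i| := by
    calc Real.sqrt (1/(m+1)) ≤ Real.sqrt (η i ^ 2) := Real.sqrt_le_sqrt hi
    _ = |η i| := Real.sqrt_sq_eq_abs _
  rcases le_or_gt 0 (η i) with h | h
  · exact Set.mem_iUnion.2 ⟨(i, true), hη, by simpa [sphSign, abs_of_nonneg h] using habs⟩
  · exact Set.mem_iUnion.2 ⟨(i, false), hη, by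
      simpa [sphSign, abs_of_neg h] using habs⟩

lemma sphGset_subset_image (i : Fin (m+1)) (b : Bool) :
    sphGset m i b ⊆ sphG i (sphSign b) '' sphD m := by
  rintro η ⟨hη, hib⟩
  have hτ : (0:ℝ) ≤ Real.sqrt (1/(m+1)) := Real.sqrt_nonneg _
  have hsign : 0 ≤ sphSign b * η i := le_trans hτ hib
  set y : Fin m → ℝ := i.removeNth η with hy
  have hsum := sphere_sum_sq hη
  have hQy : sphQ y = 1 - η i ^ 2 := by
    have := Fin.sum_univ_succAbove (fun j => η j ^ 2) i
    rw [this] at hsum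
    simp only [sphQ, hy, Fin.removeNth]
    linarith
  have hsq : 1/((m:ℝ)+1) ≤ η i ^ 2 := by
    have h1 : Real.sqrt (1/(m+1)) ^ 2 ≤ (sphSign b * η i) ^ 2 := by
      apply sq_le_sq' _ hib
      linarith
    rw [Real.sq_sqrt (by positivity : (0:ℝ) ≤ 1/((m:ℝ)+1))] at h1
    calc 1/((m:ℝ)+1) ≤ (sphSign b * η i)^2 := h1
    _ = η i ^ 2 := by rw [mul_pow, sq_sphSign, one_mul]
  have hyD : y ∈ sphD m := by
    simp only [sphD, Set.mem_setOf_eq, hQy]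
    have : ((m:ℝ)+1) = ((m:ℕ):ℝ)+1 := by push_cast; ring
    linarith [hsq]
  refine ⟨y, hyD, ?_⟩
  have hphi : sphPhi (sphSign b) y = η i := by
    have h1 : 1 - sphQ y = η i ^ 2 := by rw [hQy]; ring
    rw [sphPhi, h1, Real.sqrt_sq_eq_abs]
    have : |η i| = sphSign b * η i := by
      rw [show |η i| = |sphSign b * η i| by rw [abs_mul, abs_sphSign, one_mul]]
      exact abs_of_nonneg hsign
    rw [this, ← mul_assoc, ← sq, sq_sphSign, one_mul]
  rw [sphG, hphi, hy]
  exact congrArg (WithLp.toLp 2) (Fin.insertNth_self_removeNth i η.ofLp)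

lemma continuous_sphQ : Continuous (sphQ (m := m)) :=
  continuous_finset_sum _ fun j _ => (continuous_apply j).pow 2

lemma continuous_sphG (i : Fin (m+1)) (s : ℝ) : Continuous (sphG i s) := by
  have h1 : Continuous (fun y : Fin m → ℝ => (i.insertNth (sphPhi s y) y : Fin (m+1) → ℝ)) := by
    apply continuous_pi
    intro j
    rcases eq_or_ne j i with rfl | hj
    · simp only [Fin.insertNth_apply_same]
      exact (continuous_const.mul ((continuous_const.sub continuous_sphQ).sqrt))
    · obtain ⟨k, rfl⟩ := Fin.exists_succAbove_eq hj
      simp only [Fin.insertNth_apply_succAbove]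
      exact continuous_apply k
  exact (PiLp.continuous_toLp (p := 2) (β := fun _ : Fin (m+1) => ℝ)).comp h1

lemma measurable_sphG (i : Fin (m+1)) (s : ℝ) : Measurable (sphG i s) :=
  (continuous_sphG i s).measurable

lemma measurableSet_sphD : MeasurableSet (sphD m) :=
  measurableSet_le continuous_sphQ.measurable measurable_const

lemma measure_piece_le (i : Fin (m+1)) (b : Bool) :
    (μH[(m:ℝ)] : Measure (EuclideanSpace ℝ (Fin (m+1)))).restrict (sphGset m i b)
      ≤ (((2*(m+1)^2 : ℝ≥0) : ℝ≥0∞) ^ (m:ℝ))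
          • Measure.map (sphG i (sphSign b)) (volume.restrict (sphD m)) := by
  rw [Measure.le_iff]
  intro t ht
  have hg := measurable_sphG (m := m) i (sphSign b)
  rw [Measure.restrict_apply ht, Measure.smul_apply, Measure.map_apply hg ht,
    Measure.restrict_apply (hg ht), smul_eq_mul]
  have hsub : t ∩ sphGset m i b
      ⊆ sphG i (sphSign b) '' (sphG i (sphSign b) ⁻¹' (t ∩ sphGset m i b) ∩ sphD m) := by
    rintro x ⟨hxt, hxG⟩
    obtain ⟨y, hyD, rfl⟩ := sphGset_subset_image i b hxG
    exact ⟨y, ⟨Set.mem_preimage.2 ⟨hxt, hxG⟩, hyD⟩, rfl⟩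
  have hpi : (μH[(m:ℝ)] : Measure (Fin m → ℝ)) = volume := by
    have := MeasureTheory.hausdorffMeasure_pi_real (ι := Fin m)
    simpa using this
  calc μH[(m:ℝ)] (t ∩ sphGset m i b)
      ≤ μH[(m:ℝ)] (sphG i (sphSign b) ''
          (sphG i (sphSign b) ⁻¹' (t ∩ sphGset m i b) ∩ sphD m)) := measure_mono hsub
  _ ≤ (((2*(m+1)^2 : ℝ≥0) : ℝ≥0∞) ^ (m:ℝ))
        * μH[(m:ℝ)] (sphG i (sphSign b) ⁻¹' (t ∩ sphGset m i b) ∩ sphD m) := by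
      apply LipschitzOnWith.hausdorffMeasure_image_le
      · exact (sphG_lipschitz i (sphSign b) (by cases b <;> simp [sphSign])).mono
          Set.inter_subset_right
      · positivity
  _ ≤ (((2*(m+1)^2 : ℝ≥0) : ℝ≥0∞) ^ (m:ℝ))
        * volume (sphG i (sphSign b) ⁻¹' t ∩ sphD m) := by
      rw [hpi]
      gcongr
      exact Set.inter_subset_left

lemma lintegral_piece_le (h : EuclideanSpace ℝ (Fin (m+1)) → ℝ≥0∞) (hmeas : Measurable h)
    (i : Fin (m+1)) (b : Bool) :
    ∫⁻ η in sphGset m i b, h η ∂(μH[(m:ℝ)])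
      ≤ (((2*(m+1)^2 : ℝ≥0) : ℝ≥0∞) ^ (m:ℝ))
          * ∫⁻ y in sphD m, h (sphG i (sphSign b) y) ∂volume := by
  calc ∫⁻ η in sphGset m i b, h η ∂(μH[(m:ℝ)])
      ≤ ∫⁻ η, h η ∂((((2*(m+1)^2 : ℝ≥0) : ℝ≥0∞) ^ (m:ℝ))
          • Measure.map (sphG i (sphSign b)) (volume.restrict (sphD m))) :=
        lintegral_mono' (measure_piece_le i b) le_rfl
  _ = (((2*(m+1)^2 : ℝ≥0) : ℝ≥0∞) ^ (m:ℝ))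
        * ∫⁻ y in sphD m, h (sphG i (sphSign b) y) ∂volume := by
      rw [lintegral_smul_measure, lintegral_map hmeas (measurable_sphG i (sphSign b)), smul_eq_mul]

lemma oneDim {r : ℝ} (hr : 0 < r) :
    ∫⁻ t : ℝ, ENNReal.ofReal (r / (1 + (r*t)^2)) = ENNReal.ofReal π := by
  have hint : Integrable (fun t : ℝ => r * (1 + (r*t)^2)⁻¹) :=
    (integrable_inv_one_add_sq.comp_mul_left' hr.ne').const_mul r
  have hval : ∫ t : ℝ, r * (1 + (r*t)^2)⁻¹ = π := by
    rw [MeasureTheory.integral_const_mul]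
    rw [show (fun t : ℝ => (1 + (r*t)^2)⁻¹) = fun t : ℝ => (fun x : ℝ => (1 + x^2)⁻¹) (r * t) by
      funext t; simp]
    rw [MeasureTheory.Measure.integral_comp_mul_left (fun x : ℝ => (1 + x^2)⁻¹) r]
    rw [integral_univ_inv_one_add_sq, smul_eq_mul, abs_of_pos (by positivity : (0:ℝ) < r⁻¹)]
    field_simp
  calc ∫⁻ t : ℝ, ENNReal.ofReal (r / (1 + (r*t)^2))
      = ∫⁻ t : ℝ, ENNReal.ofReal (r * (1 + (r*t)^2)⁻¹) := by
        simp_rw [div_eq_mul_inv]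
  _ = ENNReal.ofReal (∫ t : ℝ, r * (1 + (r*t)^2)⁻¹) := by
        rw [← MeasureTheory.ofReal_integral_eq_lintegral_ofReal hint
          (by filter_upwards with t; positivity)]
  _ = ENNReal.ofReal π := by rw [hval]

lemma evalmap_le {m : ℕ} (k : Fin m) :
    Measure.map (fun y : Fin m → ℝ => y k)
        (volume.restrict (Set.pi Set.univ fun _ : Fin m => Icc (-1:ℝ) 1))
      ≤ ((2:ℝ≥0∞)^m) • volume.restrict (Icc (-1:ℝ) 1) := by
  rw [Measure.le_iff]
  intro t ht
  rw [Measure.map_apply (measurable_pi_apply k) ht, Measure.smul_apply,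
    Measure.restrict_apply ht, Measure.restrict_apply (measurable_pi_apply k ht), smul_eq_mul]
  have hset : (fun y : Fin m → ℝ => y k) ⁻¹' t ∩ (Set.pi Set.univ fun _ : Fin m => Icc (-1:ℝ) 1)
      = Set.pi Set.univ (Function.update (fun _ : Fin m => Icc (-1:ℝ) 1) k (t ∩ Icc (-1) 1)) := by
    ext y
    simp only [Set.mem_inter_iff, Set.mem_preimage, Set.mem_pi, Set.mem_univ, true_implies]
    constructor
    · rintro ⟨h1, h2⟩ j
      rcases eq_or_ne j k with rfl | hj
      · rw [Function.update_self]; exact ⟨h1, h2 j⟩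
      · rw [Function.update_of_ne hj]; exact h2 j
    · intro h
      constructor
      · have := h k; rw [Function.update_self] at this; exact this.1
      · intro j
        rcases eq_or_ne j k with rfl | hj
        · have := h j; rw [Function.update_self] at this; exact this.2
        · have := h j; rwa [Function.update_of_ne hj] at this
  rw [hset, volume_pi_pi]
  have hupd : ∀ i : Fin m, volume (Function.update (fun _ : Fin m => Icc (-1:ℝ) 1) k
      (t ∩ Icc (-1) 1) i)
      = Function.update (fun _ : Fin m => volume (Icc (-1:ℝ) 1)) k (volume (t ∩ Icc (-1) 1)) i := by
    intro i
    rcases eq_or_ne i k with rfl | hi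
    · rw [Function.update_self, Function.update_self]
    · rw [Function.update_of_ne hi, Function.update_of_ne hi]
  simp_rw [hupd]
  rw [Finset.prod_update_of_mem (Finset.mem_univ k)]
  have h2 : ∀ S : Finset (Fin m), ∏ _j ∈ S, volume (Icc (-1:ℝ) 1) ≤ (2:ℝ≥0∞)^m := by
    intro S
    rw [Finset.prod_const, Real.volume_Icc]
    calc (ENNReal.ofReal (1 - (-1)))^S.card = 2^S.card := by norm_num
    _ ≤ 2^m := by
        apply pow_le_pow_right' (by norm_num : (1:ℝ≥0∞) ≤ 2)
        calc S.card ≤ Finset.univ.card := Finset.card_le_card (Finset.subset_univ S)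
        _ = m := by simp
  calc volume (t ∩ Icc (-1:ℝ) 1) * ∏ _j ∈ Finset.univ \ {k}, volume (Icc (-1:ℝ) 1)
      ≤ volume (t ∩ Icc (-1:ℝ) 1) * (2:ℝ≥0∞)^m := by gcongr; exact h2 _
  _ = (2:ℝ≥0∞)^m * volume (t ∩ Icc (-1:ℝ) 1) := mul_comm _ _

def sphBound (m : ℕ) : ℝ≥0∞ :=
  (2*(m+1)) * ((((2*(m+1)^2 : ℝ≥0)) : ℝ≥0∞) ^ (m:ℝ)
    * ((2:ℝ≥0∞)^m * (((m:ℝ≥0∞)+1) + ENNReal.ofReal π)))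

lemma sphBound_ne_top (m : ℕ) : sphBound m ≠ ∞ := by
  apply ENNReal.mul_ne_top
  · exact ENNReal.mul_ne_top (ENNReal.natCast_ne_top 2) (by
      exact ENNReal.add_ne_top.2 ⟨ENNReal.natCast_ne_top m, ENNReal.one_ne_top⟩)
  apply ENNReal.mul_ne_top
  · exact ENNReal.rpow_ne_top_of_nonneg (by positivity) ENNReal.coe_ne_top
  apply ENNReal.mul_ne_top
  · exact ENNReal.pow_ne_top (by norm_num)
  exact ENNReal.add_ne_top.2 ⟨ENNReal.add_ne_top.2
    ⟨ENNReal.natCast_ne_top m, ENNReal.one_ne_top⟩, ENNReal.ofReal_ne_top⟩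

lemma inner_piece_bound {r : ℝ} (hr : 0 < r) (i : Fin (m+1)) (b : Bool) :
    ∫⁻ y in sphD m, ENNReal.ofReal (r / (1 + (r * (sphG i (sphSign b) y) 0)^2)) ∂volume
      ≤ (2:ℝ≥0∞)^m * (((m:ℝ≥0∞)+1) + ENNReal.ofReal π) := by
  have hm1 : (0:ℝ) < (m:ℝ)+1 := by positivity
  have hboxvol : volume (Set.pi Set.univ fun _ : Fin m => Set.Icc (-1:ℝ) 1) = (2:ℝ≥0∞)^m := by
    rw [volume_pi_pi]
    simp [Real.volume_Icc]
    norm_num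
  rcases eq_or_ne i 0 with rfl | hi
  · -- cap case
    have hb : ∀ y ∈ sphD m, ENNReal.ofReal (r / (1 + (r * (sphG 0 (sphSign b) y) 0)^2))
        ≤ ENNReal.ofReal ((m:ℝ)+1) := by
      intro y hy
      apply ENNReal.ofReal_le_ofReal
      have hcoord : (sphG 0 (sphSign b) y) 0 = sphPhi (sphSign b) y := by
        simp [sphG, Fin.insertNth_apply_same]
      rw [hcoord]
      set a := sphPhi (sphSign b) y with ha
      have hQ : sphQ y ≤ 1 - 1/(m+1) := hy
      have h1Q : (0:ℝ) ≤ 1 - sphQ y := by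
        have : 1/((m:ℝ)+1) > 0 := by positivity
        linarith
      have ha2 : a^2 = 1 - sphQ y := by
        rw [ha, sphPhi, mul_pow, sq_sphSign, one_mul, Real.sq_sqrt h1Q]
      have ha3 : 1/((m:ℝ)+1) ≤ a^2 := by rw [ha2]; linarith
      have h3 : 1 ≤ ((m:ℝ)+1) * a^2 := by
        rw [div_le_iff₀ hm1] at ha3
        linarith
      rw [div_le_iff₀ (by positivity : (0:ℝ) < 1 + (r*a)^2)]
      have h4 : r^2 * 1 ≤ r^2 * (((m:ℝ)+1) * a^2) :=
        mul_le_mul_of_nonneg_left h3 (sq_nonneg r)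
      nlinarith [sq_nonneg (r-1)]
    calc ∫⁻ y in sphD m, ENNReal.ofReal (r / (1 + (r * (sphG 0 (sphSign b) y) 0)^2)) ∂volume
        ≤ ∫⁻ _y in sphD m, ENNReal.ofReal ((m:ℝ)+1) ∂volume :=
          setLIntegral_mono' measurableSet_sphD hb
    _ = ENNReal.ofReal ((m:ℝ)+1) * volume (sphD m) := setLIntegral_const _ _
    _ ≤ ENNReal.ofReal ((m:ℝ)+1) * (2:ℝ≥0∞)^m := by
        gcongr
        rw [← hboxvol]
        exact measure_mono sphD_subset_box
    _ ≤ (2:ℝ≥0∞)^m * (((m:ℝ≥0∞)+1) + ENNReal.ofReal π) := by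
        rw [mul_comm]
        gcongr
        have : ENNReal.ofReal ((m:ℝ)+1) = (m:ℝ≥0∞)+1 := by
          rw [ENNReal.ofReal_add (by positivity) (by norm_num)]
          simp [ENNReal.ofReal_natCast]
        rw [this]
        exact le_add_right le_rfl
  · -- band case
    obtain ⟨k, hk⟩ := Fin.exists_succAbove_eq (Ne.symm hi)
    have hcoord : ∀ y : Fin m → ℝ, (sphG i (sphSign b) y) 0 = y k := by
      intro y
      rw [← hk]
      simp [sphG, Fin.insertNth_apply_succAbove]
    simp_rw [hcoord]
    have hFmeas : Measurable (fun t : ℝ => ENNReal.ofReal (r / (1 + (r * t)^2))) := by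
      apply ENNReal.measurable_ofReal.comp
      apply Measurable.div measurable_const
      exact ((measurable_const.mul measurable_id).pow measurable_const).const_add 1 |>.comp
        measurable_id |>.mono le_rfl le_rfl
    calc ∫⁻ y in sphD m, ENNReal.ofReal (r / (1 + (r * y k)^2)) ∂volume
        ≤ ∫⁻ y in Set.pi Set.univ (fun _ : Fin m => Set.Icc (-1:ℝ) 1),
            ENNReal.ofReal (r / (1 + (r * y k)^2)) ∂volume :=
          lintegral_mono_set sphD_subset_box
    _ = ∫⁻ t, ENNReal.ofReal (r / (1 + (r * t)^2))
          ∂(Measure.map (fun y : Fin m → ℝ => y k)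
            (volume.restrict (Set.pi Set.univ fun _ : Fin m => Set.Icc (-1:ℝ) 1))) := by
        rw [lintegral_map hFmeas (measurable_pi_apply k)]
    _ ≤ ∫⁻ t, ENNReal.ofReal (r / (1 + (r * t)^2))
          ∂(((2:ℝ≥0∞)^m) • volume.restrict (Set.Icc (-1:ℝ) 1)) :=
        lintegral_mono' (evalmap_le k) le_rfl
    _ = (2:ℝ≥0∞)^m * ∫⁻ t in Set.Icc (-1:ℝ) 1, ENNReal.ofReal (r / (1 + (r * t)^2)) ∂volume := by
        rw [lintegral_smul_measure, smul_eq_mul]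
    _ ≤ (2:ℝ≥0∞)^m * ∫⁻ t, ENNReal.ofReal (r / (1 + (r * t)^2)) ∂volume := by
        gcongr
        exact Measure.restrict_le_self
    _ = (2:ℝ≥0∞)^m * ENNReal.ofReal π := by rw [oneDim hr]
    _ ≤ (2:ℝ≥0∞)^m * (((m:ℝ≥0∞)+1) + ENNReal.ofReal π) :=
        mul_le_mul_right le_add_self _

lemma key_lintegral (m : ℕ) {r : ℝ} (hr : 0 ≤ r) :
    ∫⁻ η in sphere (0 : EuclideanSpace ℝ (Fin (m+1))) 1,
      ENNReal.ofReal (r / (1 + (r * η 0)^2)) ∂(μH[(m:ℝ)]) ≤ sphBound m := by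
  rcases hr.eq_or_lt with rfl | hr
  · simp
  have hηmeas : Measurable (fun η : EuclideanSpace ℝ (Fin (m+1)) => η 0) := by
    exact ((continuous_apply (0 : Fin (m+1))).comp (PiLp.continuous_ofLp (p := 2) (β := fun _ : Fin (m+1) => ℝ))).measurable
  have hmeas : Measurable (fun η : EuclideanSpace ℝ (Fin (m+1)) =>
      ENNReal.ofReal (r / (1 + (r * η 0)^2))) := by
    apply ENNReal.measurable_ofReal.comp
    exact measurable_const.div (((measurable_const.mul hηmeas).pow measurable_const).const_add 1)
  calc ∫⁻ η in sphere (0 : EuclideanSpace ℝ (Fin (m+1))) 1,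
        ENNReal.ofReal (r / (1 + (r * η 0)^2)) ∂(μH[(m:ℝ)])
      ≤ ∫⁻ η in ⋃ p : Fin (m+1) × Bool, sphGset m p.1 p.2,
          ENNReal.ofReal (r / (1 + (r * η 0)^2)) ∂(μH[(m:ℝ)]) :=
        lintegral_mono_set sphere_subset_iUnion
  _ ≤ ∫⁻ η, ENNReal.ofReal (r / (1 + (r * η 0)^2))
        ∂(Measure.sum fun p : Fin (m+1) × Bool => (μH[(m:ℝ)]).restrict (sphGset m p.1 p.2)) :=
      lintegral_mono' Measure.restrict_iUnion_le le_rfl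
  _ = ∑' p : Fin (m+1) × Bool, ∫⁻ η in sphGset m p.1 p.2,
        ENNReal.ofReal (r / (1 + (r * η 0)^2)) ∂(μH[(m:ℝ)]) := lintegral_sum_measure _ _
  _ ≤ ∑' _p : Fin (m+1) × Bool, ((((2*(m+1)^2 : ℝ≥0)) : ℝ≥0∞) ^ (m:ℝ)
        * ((2:ℝ≥0∞)^m * (((m:ℝ≥0∞)+1) + ENNReal.ofReal π))) := by
      apply ENNReal.tsum_le_tsum
      intro p
      calc ∫⁻ η in sphGset m p.1 p.2,
            ENNReal.ofReal (r / (1 + (r * η 0)^2)) ∂(μH[(m:ℝ)])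
          ≤ (((2*(m+1)^2 : ℝ≥0) : ℝ≥0∞) ^ (m:ℝ))
              * ∫⁻ y in sphD m, ENNReal.ofReal
                  (r / (1 + (r * (sphG p.1 (sphSign p.2) y) 0)^2)) ∂volume :=
            lintegral_piece_le _ hmeas p.1 p.2
      _ ≤ (((2*(m+1)^2 : ℝ≥0) : ℝ≥0∞) ^ (m:ℝ))
            * ((2:ℝ≥0∞)^m * (((m:ℝ≥0∞)+1) + ENNReal.ofReal π)) := by
          gcongr
          exact inner_piece_bound hr p.1 p.2
  _ = sphBound m := by
      rw [tsum_fintype, Finset.sum_const, nsmul_eq_mul]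
      simp only [sphBound, Finset.card_univ, Fintype.card_prod, Fintype.card_fin,
        Fintype.card_bool]
      congr 1
      push_cast
      ring

end SphAux

/-- The key sub-estimate (e:fundamentalest1): for every positive integer `n` there is
`C > 0` such that for every `e ∈ ℝⁿ`,
`∫_{S^{n-1}} |e| / (1 + (e·η)²) dH^{n-1}(η) ≤ C`. -/
theorem stmt1 (n : ℕ) (hn : 0 < n) :
    ∃ C : ℝ, 0 < C ∧ ∀ e : EuclideanSpace ℝ (Fin n),
      (∫ η in Metric.sphere (0 : EuclideanSpace ℝ (Fin n)) 1,
        ‖e‖ / (1 + (inner ℝ e η : ℝ) ^ 2) ∂(μH[(n : ℝ) - 1])) ≤ C := by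
  obtain ⟨m, rfl⟩ : ∃ m, n = m + 1 := ⟨n - 1, (Nat.succ_pred_eq_of_pos hn).symm⟩
  refine ⟨(sphBound m).toReal + 1, by positivity, fun e => ?_⟩
  have hd : ((m + 1 : ℕ) : ℝ) - 1 = (m : ℝ) := by push_cast; ring
  rw [hd]
  set S := Metric.sphere (0 : EuclideanSpace ℝ (Fin (m+1))) 1 with hS
  have hfcont : Continuous fun η : EuclideanSpace ℝ (Fin (m+1)) =>
      ‖e‖ / (1 + (inner ℝ e η : ℝ) ^ 2) := by
    apply continuous_const.div
    · exact (continuous_const.add ((continuous_const.inner continuous_id).pow 2))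
    · intro η
      positivity
  have hnonneg : ∀ η, 0 ≤ ‖e‖ / (1 + (inner ℝ e η : ℝ) ^ 2) := by
    intro η; positivity
  rw [integral_eq_lintegral_of_nonneg_ae
    (Filter.Eventually.of_forall hnonneg)
    (hfcont.aestronglyMeasurable)]
  have hkey : ∫⁻ η in S, ENNReal.ofReal (‖e‖ / (1 + (inner ℝ e η : ℝ) ^ 2)) ∂(μH[(m:ℝ)])
      ≤ sphBound m := by
    rcases eq_or_ne e 0 with rfl | he
    · simp
    -- rotation
    set u : EuclideanSpace ℝ (Fin (m+1)) := ‖e‖⁻¹ • e with hu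
    have hne : ‖e‖ ≠ 0 := norm_ne_zero_iff.2 he
    have hu_norm : ‖u‖ = 1 := by
      rw [hu, norm_smul, norm_inv, norm_norm, inv_mul_cancel₀ hne]
    have horth : Orthonormal ℝ (Set.restrict {(0 : Fin (m+1))} fun _ => u) := by
      constructor
      · intro i; exact hu_norm
      · intro i j hij
        exact absurd (Subtype.ext ((Set.mem_singleton_iff.1 i.2).trans
          (Set.mem_singleton_iff.1 j.2).symm)) hij
    obtain ⟨B, hB⟩ := horth.exists_orthonormalBasis_extension_of_card_eq
      (by simp [finrank_euclideanSpace])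
    have hB0 : B 0 = u := hB 0 rfl
    set T := B.repr with hT
    have hTu : T u = EuclideanSpace.single (0 : Fin (m+1)) (1:ℝ) := by
      rw [hT, ← hB0, B.repr_self]
    have he_eq : e = ‖e‖ • u := by
      rw [hu, smul_smul, mul_inv_cancel₀ hne, one_smul]
    have hinner : ∀ η : EuclideanSpace ℝ (Fin (m+1)),
        (inner ℝ e η : ℝ) = ‖e‖ * (T η) 0 := by
      intro η
      have h1 : (inner ℝ e η : ℝ) = ‖e‖ * (inner ℝ u η : ℝ) := by
        conv_lhs => rw [he_eq]
        rw [real_inner_smul_left]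
      have h2 : (inner ℝ u η : ℝ) = (inner ℝ (T u) (T η) : ℝ) := (T.inner_map_map u η).symm
      rw [h1, h2, hTu, EuclideanSpace.inner_single_left]
      simp
    have hMP : MeasurePreserving T (μH[(m:ℝ)]) (μH[(m:ℝ)]) :=
      T.toIsometryEquiv.measurePreserving_hausdorffMeasure _
    have hemb : MeasurableEmbedding T := T.toHomeomorph.measurableEmbedding
    have hpre : (T : EuclideanSpace ℝ (Fin (m+1)) → EuclideanSpace ℝ (Fin (m+1))) ⁻¹' S = S := by
      ext η
      simp only [Set.mem_preimage, hS, mem_sphere_zero_iff_norm, T.norm_map]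
    calc ∫⁻ η in S, ENNReal.ofReal (‖e‖ / (1 + (inner ℝ e η : ℝ) ^ 2)) ∂(μH[(m:ℝ)])
        = ∫⁻ η in S, ENNReal.ofReal (‖e‖ / (1 + (‖e‖ * (T η) 0) ^ 2)) ∂(μH[(m:ℝ)]) := by
          apply lintegral_congr
          intro η
          rw [hinner η]
    _ = ∫⁻ ξ in S, ENNReal.ofReal (‖e‖ / (1 + (‖e‖ * ξ 0) ^ 2)) ∂(μH[(m:ℝ)]) := by
          have h3 := hMP.setLIntegral_comp_preimage_emb hemb
            (fun ξ => ENNReal.ofReal (‖e‖ / (1 + (‖e‖ * ξ 0) ^ 2))) S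
          rw [hpre] at h3
          exact h3
    _ ≤ sphBound m := key_lintegral m (norm_nonneg e)
  have := ENNReal.toReal_mono (sphBound_ne_top m) hkey
  linarith
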